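/- For every n ≥ 1, the code A_n of Construction 1 begins with the list 0...000, 0...001, 0...011, ..., 1...111 (the i-th codeword having its last i−1 coordinates equal to 1 and the rest 0) and ends with the list 11...110, 011...110, 001...110, ..., 000...010. -/
import Mathlib


/-- Codewords `c` and `d` differ exactly at coordinate `i` (1-based), by `±1` there. -/
def TransAt {m : ℕ} (c d : List (ZMod m)) (i : ℕ) : Prop :=
  1 ≤ i ∧ i ≤ c.length ∧ c.length = d.length ∧
  c.take (i-1) = d.take (i-1) ∧ c.drop i = d.drop i ∧
  (d.getD (i-1) 0 = c.getD (i-1) 0 + 1 ∨ d.getD (i-1) 0 = c.getD (i-1) 0 - 1)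

/-- `C` is a cyclic Gray code with transition sequence `δ`. -/
def CyclicGrayWith {m : ℕ} (C : List (List (ZMod m))) (δ : ℕ → ℕ) : Prop :=
  C.Nodup ∧ ∀ i < C.length,
    TransAt (C.getD i []) (C.getD ((i+1) % C.length) []) (δ i)

/-- cyclic `k`-skew-tolerance of a transition sequence. -/
def SkewCyc (P : ℕ) (δ : ℕ → ℕ) (k : ℤ) : Prop :=
  ∀ i < P, |(δ i : ℤ) - (δ ((i+1) % P) : ℤ)| ≤ k

/-- Construction 1: `A 1 = [0;1]`,
`A (n+1) = [0…0 ; A n with 1 appended ; reverse of (A n minus first word) with 0 appended]`. -/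
def grayA : ℕ → List (List (ZMod 2))
  | 0 => []
  | 1 => [[0], [1]]
  | (n+2) => List.replicate (n+2) (0 : ZMod 2) ::
      ((grayA (n+1)).map (· ++ [1]) ++ (grayA (n+1)).tail.reverse.map (· ++ [0]))

/-- The `n+1` initial codewords `0…000, 0…001, 0…011, …, 1…111`. -/
def startList (n : ℕ) : List (List (ZMod 2)) :=
  (List.range (n+1)).map (fun j => List.replicate (n-j) (0 : ZMod 2) ++ List.replicate j 1)

/-- The `n-1` final codewords `11…110, 011…110, …, 000…010`. -/
def endList (n : ℕ) : List (List (ZMod 2)) :=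
  (List.range (n-1)).map
    (fun j => List.replicate j (0 : ZMod 2) ++ List.replicate (n-1-j) 1 ++ [0])


lemma startList_succ (n : ℕ) :
    startList (n+1) = List.replicate (n+1) (0 : ZMod 2) :: (startList n).map (· ++ [1]) := by
  unfold startList
  rw [List.range_succ_eq_map, List.map_cons, List.map_map, List.map_map]
  congr 1
  · simp
  · apply List.map_congr_left
    intro j _
    simp [Function.comp, Nat.succ_sub_succ, List.replicate_succ' (n := j)]

lemma start_prefix : ∀ n : ℕ, 1 ≤ n → startList n <+: grayA n := by
  intro n hn
  induction n with
  | zero => omega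
  | succ m ih =>
    rcases Nat.eq_zero_or_pos m with rfl | hm
    · show startList 1 <+: grayA 1
      have : startList 1 = grayA 1 := by decide
      rw [this]
    · obtain ⟨k, rfl⟩ : ∃ k, m = k + 1 := ⟨m - 1, by omega⟩
      have h := ih (by omega)
      rw [startList_succ]
      show _ <+: grayA (k+2)
      rw [grayA]
      refine List.cons_prefix_cons.mpr ⟨rfl, ?_⟩
      exact (h.map _).trans (List.prefix_append _ _)

lemma endList_eq (m : ℕ) :
    endList (m+3) = ((startList (m+2)).tail.reverse).map (· ++ [0]) := by
  apply List.ext_getElem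
  · simp [endList, startList]
  · intro i h1 h2
    have hi : i < m + 2 := by simpa [endList] using h1
    simp only [endList, startList, List.getElem_map, List.getElem_reverse,
      List.getElem_tail, List.getElem_range, List.length_reverse, List.length_tail,
      List.length_map, List.length_range]
    have e1 : m + 3 - 1 - i = m + 2 - i := by omega
    have e2 : m + 2 + 1 - 1 - 1 - i + 1 = m + 2 - i := by omega
    have e3 : m + 2 - (m + 2 - i) = i := by omega
    rw [e1, e2, e3, List.append_assoc]

lemma end_suffix (m : ℕ) : endList (m+3) <:+ grayA (m+3) := by
  have h := start_prefix (m+2) (by omega)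
  have h2 : (startList (m+2)).tail <+: (grayA (m+2)).tail := by
    obtain ⟨t, ht⟩ := h
    cases hs : startList (m+2) with
    | nil => simp
    | cons a l =>
      rw [← ht, hs]
      exact ⟨t, by simp⟩
  have h3 : (startList (m+2)).tail.reverse <:+ (grayA (m+2)).tail.reverse :=
    List.reverse_suffix.mpr h2
  have h4 := (h3.map (· ++ [(0 : ZMod 2)]))
  rw [← endList_eq] at h4
  show endList (m+3) <:+ grayA (m+1+2)
  rw [grayA]
  exact (h4.trans (List.suffix_append _ _)).trans (List.suffix_cons _ _)

theorem stmt3 :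
    (∀ n : ℕ, 1 ≤ n → startList n <+: grayA n) ∧
    (∀ n : ℕ, 3 ≤ n → endList n <:+ grayA n) := by
  constructor
  · exact start_prefix
  · intro n hn
    obtain ⟨m, rfl⟩ : ∃ m, n = m + 3 := ⟨n - 3, by omega⟩
    exact end_suffix m
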